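/- arXiv:2104.12268 — 2 statements merged into one kernel-verified Lean document; each statement's English description precedes it below -/
import Mathlib

section
/- Let n ≥ 2, let G_1,…,G_n be vertex-disjoint finite simple graphs with chosen vertices u_i ∈ V(G_i), and let G be their vertex-gluing at u_1,…,u_n. Fix m ≥ 1 and suppose that for each i ∈ {1,…,n} and every m-fold cover (L_i,H_i) of G_i, every vertex s ∈ L_i(u_i) satisfies m · N(s,(L_i,H_i)) ≥ P_DP(G_i,m). Then m^{n-1} · P_DP(G,m) = ∏_{i=1}^{n} P_DP(G_i,m). -/
open SimpleGraph Finset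

/-- A (standardized) `m`-fold cover of a graph `G`: the vertex set of the cover graph `H`
is `V × Fin m`, where the fiber (list) of a vertex `v` is `L v = {v} × Fin m`.
Every `m`-fold cover in the sense of Dvořák–Postle is isomorphic to one of this form. -/
structure DPCover {V : Type} (G : SimpleGraph V) (m : ℕ) where
  /-- the cover graph -/
  H : SimpleGraph (V × Fin m)
  /-- each fiber induces a complete graph -/
  fiber_complete : ∀ (v : V) (i j : Fin m), i ≠ j → H.Adj (v, i) (v, j)
  /-- cross-edges only join fibers of adjacent vertices -/
  cross : ∀ (u v : V) (i j : Fin m), H.Adj (u, i) (v, j) → u = v ∨ G.Adj u v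
  /-- the cross-edges between the fibers of two adjacent vertices form a matching -/
  matching : ∀ (u v : V), G.Adj u v → ∀ (i j j' : Fin m),
      H.Adj (u, i) (v, j) → H.Adj (u, i) (v, j') → j = j'

/-- `f` encodes an `(L,H)`-coloring of `G`, i.e. the set `{(v, f v) : v ∈ V}` is independent
in the cover graph. -/
def DPCover.IsColoring {V : Type} {G : SimpleGraph V} {m : ℕ} (C : DPCover G m)
    (f : V → Fin m) : Prop :=
  ∀ u v : V, ¬ C.H.Adj (u, f u) (v, f v)

/-- `P_DP(G, (L,H))`: the number of `(L,H)`-colorings of `G`. -/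
noncomputable def DPCover.count {V : Type} [Fintype V] {G : SimpleGraph V} {m : ℕ}
    (C : DPCover G m) : ℕ :=
  Nat.card { f : V → Fin m // C.IsColoring f }

/-- `N((v,j), (L,H))`: the number of `(L,H)`-colorings of `G` containing the vertex `(v, j)`. -/
noncomputable def DPCover.countAt {V : Type} [Fintype V] {G : SimpleGraph V} {m : ℕ}
    (C : DPCover G m) (v : V) (j : Fin m) : ℕ :=
  Nat.card { f : V → Fin m // C.IsColoring f ∧ f v = j }

/-- The DP color function `P_DP(G, m)`. -/
noncomputable def PDP {V : Type} [Fintype V] (G : SimpleGraph V) (m : ℕ) : ℕ :=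
  sInf { n : ℕ | ∃ C : DPCover G m, n = C.count }

/-- The chromatic polynomial `P(G, m)`: the number of proper colorings with colors in `Fin m`. -/
noncomputable def chromPoly {V : Type} [Fintype V] (G : SimpleGraph V) (m : ℕ) : ℕ :=
  Nat.card { f : V → Fin m // ∀ u v : V, G.Adj u v → f u ≠ f v }

/-- The DP color function threshold `τ_DP(G)`: the least `N ≥ χ(G)` such that
`P_DP(G,m) = P(G,m)` for all `m ≥ N` (and `∞` if there is no such `N`). -/
noncomputable def tauDP {V : Type} [Fintype V] (G : SimpleGraph V) : ℕ∞ :=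
  sInf { N : ℕ∞ | ∃ n : ℕ, N = (n : ℕ∞) ∧ G.chromaticNumber ≤ (n : ℕ∞) ∧
      ∀ m : ℕ, n ≤ m → PDP G m = chromPoly G m }

/-- The join `G ∨ K` of two vertex-disjoint graphs. -/
def joinG {α β : Type} (G : SimpleGraph α) (K : SimpleGraph β) : SimpleGraph (α ⊕ β) where
  Adj x y := match x, y with
    | Sum.inl a, Sum.inl a' => G.Adj a a'
    | Sum.inr b, Sum.inr b' => K.Adj b b'
    | Sum.inl _, Sum.inr _ => True
    | Sum.inr _, Sum.inl _ => True
  symm := by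
    constructor
    rintro (a | b) (a' | b') h
    · exact h.symm
    · trivial
    · trivial
    · exact h.symm
  loopless := by
    constructor
    rintro (a | b) h
    · exact G.loopless.irrefl a h
    · exact K.loopless.irrefl b h

/-- The vertex-gluing of graphs `G i` at the vertices `u i`: identify all the `u i` into a
single vertex (represented by `none`). -/
def VGlue {n : ℕ} {V : Fin n → Type} (G : ∀ i, SimpleGraph (V i)) (u : ∀ i, V i) :
    SimpleGraph (Option (Σ i : Fin n, {x : V i // x ≠ u i})) where
  Adj a b := match a, b with
    | none, none => False
    | none, some ⟨i, x⟩ => (G i).Adj (u i) x.val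
    | some ⟨i, x⟩, none => (G i).Adj x.val (u i)
    | some ⟨i, x⟩, some ⟨j, y⟩ => ∃ h : i = j, (G j).Adj (cast (congrArg V h) x.val) y.val
  symm := by
    constructor
    rintro (_ | ⟨i, x⟩) (_ | ⟨j, y⟩) h
    · exact h.elim
    · exact h.symm
    · exact h.symm
    · obtain ⟨rfl, h⟩ := h
      exact ⟨rfl, h.symm⟩
  loopless := by
    constructor
    rintro (_ | ⟨i, x⟩) h
    · exact h
    · obtain ⟨h', h⟩ := h
      exact (G i).loopless.irrefl x.val h

/-- The `K_p`-gluing of graphs `G i`, each with a chosen `p`-clique `U i 0, …, U i (p-1)`: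
the cliques are identified coordinatewise (the glued clique is `Sum.inl (Fin p)`). -/
def KGlue {n p : ℕ} {V : Fin n → Type} (G : ∀ i, SimpleGraph (V i))
    (U : ∀ i, Fin p → V i) :
    SimpleGraph ((Fin p) ⊕ (Σ i : Fin n, {x : V i // ∀ q, x ≠ U i q})) where
  Adj a b := match a, b with
    | Sum.inl q, Sum.inl q' => q ≠ q'
    | Sum.inl q, Sum.inr ⟨i, x⟩ => (G i).Adj (U i q) x.val
    | Sum.inr ⟨i, x⟩, Sum.inl q => (G i).Adj x.val (U i q)
    | Sum.inr ⟨i, x⟩, Sum.inr ⟨j, y⟩ => ∃ h : i = j, (G j).Adj (cast (congrArg V h) x.val) y.val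
  symm := by
    constructor
    rintro (q | ⟨i, x⟩) (q' | ⟨j, y⟩) h
    · exact h.symm
    · exact h.symm
    · exact h.symm
    · obtain ⟨rfl, h⟩ := h
      exact ⟨rfl, h.symm⟩
  loopless := by
    constructor
    rintro (q | ⟨i, x⟩) h
    · exact h rfl
    · obtain ⟨h', h⟩ := h
      exact (G i).loopless.irrefl x.val h

/-- The disjoint union of a family of graphs. -/
def sigmaG {n : ℕ} {V : Fin n → Type} (G : ∀ i, SimpleGraph (V i)) :
    SimpleGraph (Σ i : Fin n, V i) where
  Adj a b := ∃ h : a.1 = b.1, (G b.1).Adj (cast (congrArg V h) a.2) b.2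
  symm := by
    constructor
    rintro ⟨i, x⟩ ⟨j, y⟩ ⟨h1, h2⟩
    dsimp only at h1 h2 ⊢
    subst h1
    exact ⟨rfl, h2.symm⟩
  loopless := by
    constructor
    rintro ⟨i, x⟩ ⟨h1, h2⟩
    dsimp only at h2
    exact (G i).loopless.irrefl x h2

/-- chordal: every cycle of length at least `4` has a chord, i.e. an edge of the graph
joining two vertices of the cycle that is not an edge of the cycle. -/
def IsChordal {V : Type} (G : SimpleGraph V) : Prop :=
  ∀ (v : V) (w : G.Walk v v), w.IsCycle → 4 ≤ w.length →
    ∃ x y, x ∈ w.support ∧ y ∈ w.support ∧ G.Adj x y ∧ s(x, y) ∉ w.edges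


section Glue

set_option linter.unusedSectionVars false

open Finset

lemma nat_card_sigma' {ι : Type} [Fintype ι] (β : ι → Type) [∀ i, Finite (β i)] :
    Nat.card (Σ i, β i) = ∑ i, Nat.card (β i) := by
  classical
  letI : ∀ i, Fintype (β i) := fun i => Fintype.ofFinite _
  simp [Nat.card_eq_fintype_card, Fintype.card_sigma]

/-- the trivial cover -/
def trivCover {A : Type} (Γ : SimpleGraph A) (m : ℕ) : DPCover Γ m where
  H := { Adj := fun p q => p.1 = q.1 ∧ p.2 ≠ q.2
         symm := by constructor; rintro ⟨x,a⟩ ⟨y,b⟩ ⟨h1,h2⟩; exact ⟨h1.symm, h2.symm⟩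
         loopless := by constructor; rintro ⟨x,a⟩ ⟨h1,h2⟩; exact h2 rfl }
  fiber_complete := fun v i j hij => ⟨rfl, hij⟩
  cross := fun x y i j hadj => Or.inl hadj.1
  matching := fun x y hxy i j j' h1 h2 => absurd h1.1 (Γ.ne_of_adj hxy)

lemma PDP_mem {A : Type} [Fintype A] (Γ : SimpleGraph A) (m : ℕ) :
    ∃ C : DPCover Γ m, PDP Γ m = C.count := by
  have : PDP Γ m ∈ { k : ℕ | ∃ C : DPCover Γ m, k = C.count } :=
    Nat.sInf_mem ⟨_, trivCover Γ m, rfl⟩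
  exact this

lemma PDP_le {A : Type} [Fintype A] {Γ : SimpleGraph A} {m : ℕ} (C : DPCover Γ m) :
    PDP Γ m ≤ C.count := Nat.sInf_le ⟨C, rfl⟩

lemma count_eq_sum_countAt {A : Type} [Fintype A] {Γ : SimpleGraph A} {m : ℕ}
    (C : DPCover Γ m) (v : A) : C.count = ∑ j : Fin m, C.countAt v j := by
  classical
  have e : { f : A → Fin m // C.IsColoring f } ≃
      Σ j : Fin m, { f : A → Fin m // C.IsColoring f ∧ f v = j } :=
    { toFun := fun f => ⟨f.1 v, f.1, f.2, rfl⟩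
      invFun := fun s => ⟨s.2.1, s.2.2.1⟩
      left_inv := fun f => rfl
      right_inv := by rintro ⟨j, f, hf, rfl⟩; rfl }
  rw [DPCover.count, Nat.card_congr e, nat_card_sigma']
  rfl

variable {n : ℕ} {V : Fin n → Type} [∀ i, Fintype (V i)] [∀ i, DecidableEq (V i)]
  {G : ∀ i, SimpleGraph (V i)} {u : ∀ i, V i} {m : ℕ}

def embedV (u : ∀ i, V i) (i : Fin n) (x : V i) :
    Option (Σ i : Fin n, {x : V i // x ≠ u i}) :=
  if h : x = u i then none else some ⟨i, ⟨x, h⟩⟩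

lemma embedV_u {i : Fin n} : embedV u i (u i) = none := dif_pos rfl

lemma embedV_some {i : Fin n} {x : V i} (h : x ≠ u i) :
    embedV u i x = some ⟨i, ⟨x, h⟩⟩ := dif_neg h

lemma embedV_eq_none {i : Fin n} {x : V i} : embedV u i x = none ↔ x = u i := by
  unfold embedV; split <;> simp_all

lemma embedV_inj {i : Fin n} {x y : V i} (h : embedV u i x = embedV u i y) : x = y := by
  unfold embedV at h
  split at h <;> split at h <;> simp_all

lemma embedV_index {i k : Fin n} {x : V i} {z : {a : V k // a ≠ u k}}
    (h : embedV u i x = some ⟨k, z⟩) : i = k := by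
  unfold embedV at h; split at h
  · simp at h
  · simpa using (Sigma.mk.inj_iff.mp (Option.some_injective _ h)).1

lemma embedV_val {i : Fin n} {x : V i} {z : {a : V i // a ≠ u i}}
    (h : embedV u i x = some ⟨i, z⟩) : x = z.val := by
  unfold embedV at h; split at h
  · simp at h
  · have h2 := (Sigma.mk.inj_iff.mp (Option.some_injective _ h)).2
    have h3 : (⟨x, by assumption⟩ : {a : V i // a ≠ u i}) = z := eq_of_heq h2
    exact congrArg Subtype.val h3

lemma adj_embedV {i : Fin n} {x y : V i} :
    (VGlue G u).Adj (embedV u i x) (embedV u i y) ↔ (G i).Adj x y := by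
  unfold embedV
  split <;> split <;> rename_i h1 h2
  · subst h1; subst h2; simp [VGlue]
  · subst h1
    show (G i).Adj (u i) y ↔ _
    rfl
  · subst h2
    show (G i).Adj x (u i) ↔ _
    rfl
  · show (∃ _ : i = i, _) ↔ _
    constructor
    · rintro ⟨h, ha⟩; exact ha
    · intro ha; exact ⟨rfl, ha⟩

/-- restriction of a cover of the glued graph to the `i`-th part -/
def restrictC (C : DPCover (VGlue G u) m) (i : Fin n) : DPCover (G i) m where
  H := { Adj := fun p q => C.H.Adj (embedV u i p.1, p.2) (embedV u i q.1, q.2)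
         symm := ⟨fun p q h => C.H.adj_symm h⟩
         loopless := ⟨fun p h => C.H.loopless.irrefl _ h⟩ }
  fiber_complete := fun v a b hab => C.fiber_complete (embedV u i v) a b hab
  cross := fun x y a b hadj => by
    rcases C.cross _ _ _ _ hadj with heq | hadj'
    · exact Or.inl (embedV_inj heq)
    · exact Or.inr (adj_embedV.mp hadj')
  matching := fun x y hxy a b b' h1 h2 =>
    C.matching _ _ (adj_embedV.mpr hxy) a b b' h1 h2

lemma restrictC_adj (C : DPCover (VGlue G u) m) (i : Fin n) {x y : V i} {a b : Fin m} :
    (restrictC C i).H.Adj (x, a) (y, b) ↔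
      C.H.Adj (embedV u i x, a) (embedV u i y, b) := Iff.rfl

lemma assembled_isColoring (C : DPCover (VGlue G u) m) (j : Fin m)
    (g : Π i : Fin n, { g : V i → Fin m // (restrictC C i).IsColoring g ∧ g (u i) = j }) :
    C.IsColoring (fun w => match w with
      | none => j
      | some ⟨i, x⟩ => (g i).1 x.val) := by
  rintro (_ | ⟨i, x⟩) (_ | ⟨k, y⟩) hadj
  · exact C.H.loopless.irrefl _ hadj
  · have h1 : (g k).1 (u k) = j := (g k).2.2
    have h2 := (g k).2.1 (u k) y.val
    rw [restrictC_adj, embedV_u, embedV_some y.2, h1] at h2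
    exact h2 hadj
  · have h1 : (g i).1 (u i) = j := (g i).2.2
    have h2 := (g i).2.1 x.val (u i)
    rw [restrictC_adj, embedV_u, embedV_some x.2, h1] at h2
    exact h2 hadj
  · by_cases hik : i = k
    · subst hik
      have h2 := (g i).2.1 x.val y.val
      rw [restrictC_adj, embedV_some x.2, embedV_some y.2] at h2
      exact h2 hadj
    · rcases C.cross _ _ _ _ hadj with heq | hadj'
      · exact hik (congrArg Sigma.fst (Option.some_injective _ heq))
      · obtain ⟨h', -⟩ := hadj'
        exact hik h'

def colorEquivAux (C : DPCover (VGlue G u) m) :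
    { f : Option (Σ i : Fin n, {x : V i // x ≠ u i}) → Fin m // C.IsColoring f } ≃
      Σ j : Fin m, Π i : Fin n,
        { g : V i → Fin m // (restrictC C i).IsColoring g ∧ g (u i) = j } where
  toFun f := ⟨f.1 none, fun i =>
    ⟨fun x => f.1 (embedV u i x), fun x y => f.2 _ _, by simp only [embedV_u]⟩⟩
  invFun s := ⟨fun w => match w with
      | none => s.1
      | some ⟨i, x⟩ => (s.2 i).1 x.val, assembled_isColoring C s.1 s.2⟩
  left_inv := by
    rintro ⟨f, hf⟩
    apply Subtype.ext
    funext w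
    match w with
    | none => rfl
    | some ⟨i, x⟩ =>
      show f (embedV u i x.val) = f (some ⟨i, x⟩)
      rw [embedV_some x.2]
  right_inv := by
    rintro ⟨j, g⟩
    refine Sigma.ext rfl (heq_of_eq ?_)
    funext i
    apply Subtype.ext
    funext x
    show (fun w => match w with
        | none => j
        | some (⟨i, x⟩ : Σ i : Fin n, {x : V i // x ≠ u i}) => (g i).1 x.val)
        (embedV u i x) = (g i).1 x
    unfold embedV
    split <;> rename_i hx
    · subst hx; exact ((g i).2.2).symm
    · rfl

lemma count_eq_sum_prod (C : DPCover (VGlue G u) m) :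
    C.count = ∑ j : Fin m, ∏ i : Fin n, (restrictC C i).countAt (u i) j := by
  classical
  rw [DPCover.count, Nat.card_congr (colorEquivAux C), nat_card_sigma']
  congr 1
  funext j
  rw [Nat.card_pi]
  rfl

/-- the glued cover -/
def glueCover (hn : 0 < n) (C : ∀ i, DPCover (G i) m) : DPCover (VGlue G u) m where
  H := { Adj := fun p q => ∃ (i : Fin n) (x y : V i),
           p.1 = embedV u i x ∧ q.1 = embedV u i y ∧ (C i).H.Adj (x, p.2) (y, q.2)
         symm := by
           constructor
           rintro p q ⟨i, x, y, hx, hy, hadj⟩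
           exact ⟨i, y, x, hy, hx, (C i).H.adj_symm hadj⟩
         loopless := by
           constructor
           rintro ⟨w, a⟩ ⟨i, x, y, hx, hy, hadj⟩
           obtain rfl : x = y := embedV_inj (hx.symm.trans hy)
           exact (C i).H.loopless.irrefl _ hadj }
  fiber_complete := by
    rintro (_ | ⟨i, x⟩) a b hab
    · refine ⟨⟨0, hn⟩, u _, u _, ?_, ?_, (C _).fiber_complete _ a b hab⟩
      · exact embedV_u.symm
      · exact embedV_u.symm
    · refine ⟨i, x.val, x.val, ?_, ?_, (C i).fiber_complete _ a b hab⟩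
      · exact (embedV_some x.2).symm
      · exact (embedV_some x.2).symm
  cross := by
    rintro w w' a b ⟨i, x, y, hx, hy, hadj⟩
    dsimp only at hx hy
    subst hx; subst hy
    rcases (C i).cross _ _ _ _ hadj with rfl | hadj'
    · exact Or.inl rfl
    · exact Or.inr (adj_embedV.mpr hadj')
  matching := by
    rintro w w' hww a b b' ⟨i, x, y, hx, hy, hadj⟩ ⟨i', x', y', hx', hy', hadj'⟩
    dsimp only at hx hy hx' hy' hadj hadj'
    rcases w with _ | ⟨k, z⟩ <;> rcases w' with _ | ⟨k2, z2⟩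
    · exact absurd hww (by simp [VGlue])
    · obtain rfl : u i = x := (embedV_eq_none.mp hx.symm).symm
      obtain rfl : u i' = x' := (embedV_eq_none.mp hx'.symm).symm
      obtain rfl : i = k2 := embedV_index hy.symm
      obtain rfl : i = i' := (embedV_index hy'.symm).symm
      obtain rfl : z2.val = y := (embedV_val hy.symm).symm
      obtain rfl : z2.val = y' := (embedV_val hy'.symm).symm
      have hGadj : (G i).Adj (u i) z2.val := hww
      exact (C i).matching _ _ hGadj a b b' hadj hadj'
    · obtain rfl : u i = y := (embedV_eq_none.mp hy.symm).symm
      obtain rfl : u i' = y' := (embedV_eq_none.mp hy'.symm).symm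
      obtain rfl : i = k := embedV_index hx.symm
      obtain rfl : i = i' := (embedV_index hx'.symm).symm
      obtain rfl : z.val = x := (embedV_val hx.symm).symm
      obtain rfl : z.val = x' := (embedV_val hx'.symm).symm
      have hGadj : (G i).Adj z.val (u i) := hww
      exact (C i).matching _ _ hGadj a b b' hadj hadj'
    · obtain rfl : i = k := embedV_index hx.symm
      obtain rfl : i = i' := (embedV_index hx'.symm).symm
      obtain rfl : i = k2 := embedV_index hy.symm
      obtain rfl : z.val = x := (embedV_val hx.symm).symm
      obtain rfl : z.val = x' := (embedV_val hx'.symm).symm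
      obtain rfl : z2.val = y := (embedV_val hy.symm).symm
      obtain rfl : z2.val = y' := (embedV_val hy'.symm).symm
      have hGadj : (G i).Adj z.val z2.val := by
        obtain ⟨h', ha⟩ := hww
        exact ha
      exact (C i).matching _ _ hGadj a b b' hadj hadj'

lemma glue_adj (hn : 0 < n) (C : ∀ i, DPCover (G i) m) {i : Fin n} {x y : V i}
    {a b : Fin m} :
    (glueCover (u := u) hn C).H.Adj (embedV u i x, a) (embedV u i y, b) ↔
      (C i).H.Adj (x, a) (y, b) := by
  constructor
  · rintro ⟨k, x', y', hx, hy, hadj⟩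
    dsimp only at hx hy hadj
    by_cases hxu : x = u i
    · subst hxu
      rw [embedV_u] at hx
      obtain rfl : u k = x' := (embedV_eq_none.mp hx.symm).symm
      by_cases hyu : y = u i
      · subst hyu
        rw [embedV_u] at hy
        obtain rfl : u k = y' := (embedV_eq_none.mp hy.symm).symm
        have hab : a ≠ b := by
          rintro rfl
          exact (C k).H.loopless.irrefl _ hadj
        exact (C i).fiber_complete _ a b hab
      · rw [embedV_some hyu] at hy
        obtain rfl : i = k := (embedV_index hy.symm).symm
        obtain rfl := embedV_val hy.symm
        exact hadj
    · rw [embedV_some hxu] at hx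
      obtain rfl : i = k := (embedV_index hx.symm).symm
      obtain rfl := embedV_val hx.symm
      by_cases hyu : y = u i
      · subst hyu
        rw [embedV_u] at hy
        obtain rfl : u i = y' := (embedV_eq_none.mp hy.symm).symm
        exact hadj
      · rw [embedV_some hyu] at hy
        obtain rfl := embedV_val hy.symm
        exact hadj
  · intro hadj
    exact ⟨i, x, y, rfl, rfl, hadj⟩

lemma restrict_glue_isColoring (hn : 0 < n) (C : ∀ i, DPCover (G i) m) (i : Fin n)
    (f : V i → Fin m) :
    (restrictC (glueCover (u := u) hn C) i).IsColoring f ↔ (C i).IsColoring f := by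
  constructor
  · intro hf x y hadj
    exact hf x y ((restrictC_adj _ _).mpr ((glue_adj (u := u) hn C).mpr hadj))
  · intro hf x y hadj
    exact hf x y ((glue_adj (u := u) hn C).mp ((restrictC_adj _ _).mp hadj))

lemma restrict_glue_countAt (hn : 0 < n) (C : ∀ i, DPCover (G i) m) (i : Fin n)
    (j : Fin m) :
    (restrictC (glueCover (u := u) hn C) i).countAt (u i) j = (C i).countAt (u i) j := by
  apply Nat.card_congr
  exact Equiv.subtypeEquivRight fun f =>
    and_congr_left' (restrict_glue_isColoring hn C i f)

end Glue
theorem stmt_11 {n : ℕ} (hn : 2 ≤ n) {V : Fin n → Type}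
    [∀ i, Fintype (V i)] [∀ i, DecidableEq (V i)]
    (G : ∀ i, SimpleGraph (V i)) (u : ∀ i, V i) (m : ℕ) (hm : 1 ≤ m)
    (h : ∀ (i : Fin n) (C : DPCover (G i) m) (j : Fin m),
      PDP (G i) m ≤ m * C.countAt (u i) j) :
    m ^ (n - 1) * PDP (VGlue G u) m = ∏ i : Fin n, PDP (G i) m := by
  classical
  have hn0 : 0 < n := lt_of_lt_of_le two_pos hn
  have hm0 : 0 < m := hm
  have hpow : m * m ^ (n - 1) = m ^ n := by
    rw [← pow_succ', Nat.sub_add_cancel hn0]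
  -- Lower bound: for every cover D of the glued graph
  have lower : ∀ D : DPCover (VGlue G u) m,
      (∏ i : Fin n, PDP (G i) m) ≤ m ^ (n - 1) * D.count := by
    intro D
    have hmain : m * ∏ i : Fin n, PDP (G i) m ≤ m ^ n * D.count := by
      rw [count_eq_sum_prod, Finset.mul_sum]
      calc m * ∏ i : Fin n, PDP (G i) m
          = ∑ _j : Fin m, ∏ i : Fin n, PDP (G i) m := by
            rw [Finset.sum_const, Finset.card_univ, Fintype.card_fin, smul_eq_mul]
        _ ≤ ∑ j : Fin m, ∏ i : Fin n, (m * (restrictC D i).countAt (u i) j) := by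
            apply Finset.sum_le_sum
            intro j _
            apply Finset.prod_le_prod' 
            intro i _
            exact h i (restrictC D i) j
        _ = ∑ j : Fin m, m ^ n * ∏ i : Fin n, (restrictC D i).countAt (u i) j := by
            apply Finset.sum_congr rfl
            intro j _
            rw [Finset.prod_mul_distrib, Finset.prod_const, Finset.card_univ,
              Fintype.card_fin]
    apply Nat.le_of_mul_le_mul_left _ hm0
    calc m * ∏ i : Fin n, PDP (G i) m ≤ m ^ n * D.count := hmain
      _ = m * (m ^ (n - 1) * D.count) := by rw [← mul_assoc, hpow]
  -- Optimal covers for the pieces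
  choose C hC using fun i => PDP_mem (G i) m
  have key : ∀ (i : Fin n) (j : Fin m), m * (C i).countAt (u i) j = PDP (G i) m := by
    intro i
    have hsum : ∑ j : Fin m, PDP (G i) m = ∑ j : Fin m, m * (C i).countAt (u i) j := by
      rw [← Finset.mul_sum, ← count_eq_sum_countAt, ← hC i, Finset.sum_const,
        Finset.card_univ, Fintype.card_fin, smul_eq_mul, mul_comm]
    have hle : ∀ j ∈ Finset.univ, PDP (G i) m ≤ m * (C i).countAt (u i) j :=
      fun j _ => h i (C i) j
    intro j
    exact ((Finset.sum_eq_sum_iff_of_le hle).mp hsum j (Finset.mem_univ j)).symm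
  -- The glued cover
  set Cg := glueCover (u := u) hn0 C with hCg
  have hCgcount : m * (m ^ (n - 1) * Cg.count) = m * ∏ i : Fin n, PDP (G i) m := by
    rw [← mul_assoc, hpow, count_eq_sum_prod, Finset.mul_sum]
    calc ∑ j : Fin m, m ^ n * ∏ i : Fin n, (restrictC Cg i).countAt (u i) j
        = ∑ _j : Fin m, ∏ i : Fin n, PDP (G i) m := by
          apply Finset.sum_congr rfl
          intro j _
          calc m ^ n * ∏ i : Fin n, (restrictC Cg i).countAt (u i) j
              = ∏ i : Fin n, (m * (restrictC Cg i).countAt (u i) j) := by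
                rw [Finset.prod_mul_distrib, Finset.prod_const, Finset.card_univ,
                  Fintype.card_fin]
            _ = ∏ i : Fin n, PDP (G i) m := by
                apply Finset.prod_congr rfl
                intro i _
                rw [hCg, restrict_glue_countAt hn0 C i j]
                exact key i j
      _ = m * ∏ i : Fin n, PDP (G i) m := by
          rw [Finset.sum_const, Finset.card_univ, Fintype.card_fin, smul_eq_mul]
  have hupper_eq : m ^ (n - 1) * Cg.count = ∏ i : Fin n, PDP (G i) m :=
    Nat.eq_of_mul_eq_mul_left hm0 hCgcount
  apply le_antisymm
  · calc m ^ (n - 1) * PDP (VGlue G u) m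
        ≤ m ^ (n - 1) * Cg.count := Nat.mul_le_mul_left _ (PDP_le Cg)
      _ = ∏ i : Fin n, PDP (G i) m := hupper_eq
  · obtain ⟨D, hD⟩ := PDP_mem (VGlue G u) m
    rw [hD]
    exact lower D
end

section
/- Let G be a finite chordal graph, let m ≥ χ(G), and let (L,H) be any m-fold cover of G. Then for every vertex u of G and every r ∈ L(u), the number of (L,H)-colorings of G containing r satisfies m · N(r,(L,H)) ≥ P_DP(G,m). -/
open SimpleGraph Finset

variable {V : Type} (G : SimpleGraph V)

/-- connectivity avoiding a set S -/
def Reach (S : Set V) (x y : V) : Prop :=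
  ∃ w : G.Walk x y, ∀ z ∈ w.support, z ∉ S

namespace Reach

variable {G} {S : Set V} {x y z : V}

lemma refl (hx : x ∉ S) : Reach G S x x := ⟨.nil, by simp [hx]⟩

lemma symm (h : Reach G S x y) : Reach G S y x := by
  obtain ⟨w, hw⟩ := h
  exact ⟨w.reverse, by simpa using hw⟩

lemma trans (h1 : Reach G S x y) (h2 : Reach G S y z) : Reach G S x z := by
  obtain ⟨w1, hw1⟩ := h1; obtain ⟨w2, hw2⟩ := h2
  refine ⟨w1.append w2, fun a ha => ?_⟩
  rw [SimpleGraph.Walk.mem_support_append_iff] at ha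
  exact ha.elim (hw1 a) (hw2 a)

lemma adj (h : G.Adj x y) (hx : x ∉ S) (hy : y ∉ S) : Reach G S x y :=
  ⟨.cons h .nil, by intro z hz; simp at hz; rcases hz with rfl | rfl <;> assumption⟩

lemma not_mem_left (h : Reach G S x y) : x ∉ S := by
  obtain ⟨w, hw⟩ := h; exact hw x w.start_mem_support

lemma not_mem_right (h : Reach G S x y) : y ∉ S := by
  obtain ⟨w, hw⟩ := h; exact hw y w.end_mem_support

/-- every vertex of an S-avoiding walk from x is reachable from x -/
lemma of_mem_support {w : G.Walk x y} (hw : ∀ z ∈ w.support, z ∉ S)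
    (hz : z ∈ w.support) : Reach G S x z := by
  classical
  exact ⟨w.takeUntil z hz, fun a ha => hw a (w.support_takeUntil_subset hz ha)⟩

end Reach

/-- shortcut lemma: a chord of a walk gives a shorter walk with smaller support -/
lemma shortcut {x y u v : V} (p : G.Walk x y) (hu : u ∈ p.support) (hv : v ∈ p.support)
    (hadj : G.Adj u v) (hne : s(u, v) ∉ p.edges) :
    ∃ q : G.Walk x y, q.length < p.length ∧ ∀ z ∈ q.support, z ∈ p.support := by
  classical
  have hlen1 : ∀ {a b : V} (w : G.Walk a b), w.length = 1 → w.edges = [s(a, b)] := by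
    intro a b w hw
    cases w with
    | nil => simp at hw
    | cons h w' =>
      cases w' with
      | nil => simp
      | cons h' w'' => simp [SimpleGraph.Walk.length_cons] at hw
  set t := p.takeUntil u hu with ht
  set d := p.dropUntil u hu with hd
  have hlenp : t.length + d.length = p.length := by
    have hts := p.take_spec hu
    calc t.length + d.length = (t.append d).length := (SimpleGraph.Walk.length_append _ _).symm
      _ = p.length := by rw [hts]
  by_cases hcase : v ∈ d.support
  · set d1 := d.takeUntil v hcase with hd1
    set d2 := d.dropUntil v hcase with hd2
    have hlend : d1.length + d2.length = d.length := by
      have hts := d.take_spec hcase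
      calc d1.length + d2.length = (d1.append d2).length :=
            (SimpleGraph.Walk.length_append _ _).symm
        _ = d.length := by rw [hts]
    have hd1len : 2 ≤ d1.length := by
      rcases Nat.lt_or_ge d1.length 2 with h2 | h2
      · interval_cases h : d1.length
        · exact absurd (SimpleGraph.Walk.eq_of_length_eq_zero h) hadj.ne
        · exact absurd (p.edges_dropUntil_subset hu (d.edges_takeUntil_subset hcase
            (by rw [hlen1 d1 h]; simp))) hne
      · exact h2
    refine ⟨t.append (SimpleGraph.Walk.cons hadj d2), ?_, ?_⟩
    · rw [SimpleGraph.Walk.length_append, SimpleGraph.Walk.length_cons]; omega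
    · intro z hz
      rw [SimpleGraph.Walk.mem_support_append_iff] at hz
      rcases hz with hz | hz
      · exact p.support_takeUntil_subset hu hz
      · rw [SimpleGraph.Walk.support_cons] at hz
        rcases List.mem_cons.mp hz with rfl | hz
        · exact hu
        · exact p.support_dropUntil_subset hu (d.support_dropUntil_subset hcase hz)
  · have hvt : v ∈ t.support := by
      have := (SimpleGraph.Walk.mem_support_append_iff _ _).mp (by rw [p.take_spec hu]; exact hv)
      tauto
    set t1 := t.takeUntil v hvt with ht1
    set t2 := t.dropUntil v hvt with ht2
    have hlent : t1.length + t2.length = t.length := by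
      have hts := t.take_spec hvt
      calc t1.length + t2.length = (t1.append t2).length :=
            (SimpleGraph.Walk.length_append _ _).symm
        _ = t.length := by rw [hts]
    have ht2len : 2 ≤ t2.length := by
      rcases Nat.lt_or_ge t2.length 2 with h2 | h2
      · interval_cases h : t2.length
        · exact absurd (SimpleGraph.Walk.eq_of_length_eq_zero h) hadj.ne.symm
        · refine absurd (p.edges_takeUntil_subset hu (t.edges_dropUntil_subset hvt
            (by rw [hlen1 t2 h]; rw [Sym2.eq_swap]; simp))) hne
      · exact h2
    refine ⟨t1.append (SimpleGraph.Walk.cons hadj.symm d), ?_, ?_⟩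
    · rw [SimpleGraph.Walk.length_append, SimpleGraph.Walk.length_cons]; omega
    · intro z hz
      rw [SimpleGraph.Walk.mem_support_append_iff] at hz
      rcases hz with hz | hz
      · exact p.support_takeUntil_subset hu (t.support_takeUntil_subset hvt hz)
      · rw [SimpleGraph.Walk.support_cons] at hz
        rcases List.mem_cons.mp hz with rfl | hz
        · exact hv
        · exact p.support_dropUntil_subset hu hz


/-- a vertex whose neighborhood is a clique -/
def Simplicial (s : V) : Prop := ∀ a b : V, G.Adj s a → G.Adj s b → a ≠ b → G.Adj a b

lemma IsChordal.induce {G : SimpleGraph V} (hG : IsChordal G) (W : Set V) :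
    IsChordal (G.induce W) := by
  intro v w hcyc hlen
  have hinj : Function.Injective (SimpleGraph.Embedding.induce (G := G) W) := Subtype.val_injective
  set f := SimpleGraph.Embedding.induce (G := G) W with hf
  set w' := w.map f.toHom with hw'
  obtain ⟨xx, yy, hx, hy, hadj, hne⟩ := hG (f v) w' (hcyc.map hinj)
    (by rwa [hw', SimpleGraph.Walk.length_map])
  rw [hw', SimpleGraph.Walk.support_map, List.mem_map] at hx hy
  obtain ⟨x', hx', rfl⟩ := hx
  obtain ⟨y', hy', rfl⟩ := hy
  refine ⟨x', y', hx', hy', f.map_adj_iff.mp hadj, fun hc => hne ?_⟩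
  rw [hw', SimpleGraph.Walk.edges_map]
  exact List.mem_map_of_mem hc

lemma walk_length_one_edges {x y : V} {G : SimpleGraph V} (w : G.Walk x y) (hw : w.length = 1) :
    w.edges = [s(x, y)] := by
  cases w with
  | nil => simp at hw
  | cons h w' =>
    cases w' with
    | nil => simp
    | cons h' w'' => simp [SimpleGraph.Walk.length_cons] at hw

lemma simplicial_transfer {G : SimpleGraph V} {W : Set V} {v : V} (hv : v ∈ W)
    (hnb : ∀ z, G.Adj v z → z ∈ W) (hs : Simplicial (G.induce W) ⟨v, hv⟩) :
    Simplicial G v := by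
  intro p q hp hq hpq
  have h := hs ⟨p, hnb p hp⟩ ⟨q, hnb q hq⟩ (by simpa using hp) (by simpa using hq)
    (by simpa [Subtype.ext_iff] using hpq)
  simpa using h

theorem dirac : ∀ (n : ℕ) (V : Type) [Fintype V] (G : SimpleGraph V), IsChordal G →
    Fintype.card V ≤ n →
    (∀ x y : V, x ≠ y → G.Adj x y) ∨
    ∃ s t : V, s ≠ t ∧ ¬G.Adj s t ∧ Simplicial G s ∧ Simplicial G t := by
  intro n
  induction n with
  | zero =>
    intro V _ G _ hcard
    left
    intro x y _
    exact absurd (Fintype.card_pos_iff.mpr ⟨x⟩) (by omega)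
  | succ n ih =>
    intro V _ G hG hcard
    classical
    by_cases hcomp : ∀ x y : V, x ≠ y → G.Adj x y
    · exact Or.inl hcomp
    right
    push_neg at hcomp
    obtain ⟨a, b, hab, hnab⟩ := hcomp
    -- minimal separator
    set P : Finset V → Prop := fun S => a ∉ S ∧ b ∉ S ∧ ¬Reach G ↑S a b with hP
    have hP0 : P ((Finset.univ.erase a).erase b) := by
      refine ⟨by simp [hab.symm], by simp, ?_⟩
      rintro ⟨w, hw⟩
      cases w with
      | nil => exact hab rfl
      | @cons _ c _ h w' =>
        have hc : c ∈ (SimpleGraph.Walk.cons h w').support := by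
          rw [SimpleGraph.Walk.support_cons]
          exact List.mem_cons_of_mem _ w'.start_mem_support
        have h2 := hw c hc
        rcases Classical.em (c = b) with hcb | hcb
        · exact hnab (hcb ▸ h)
        · rcases Classical.em (c = a) with hca | hca
          · exact G.loopless.irrefl a (hca ▸ h)
          · exact h2 (by simp [hca, hcb])
    have hne : {k | ∃ S, P S ∧ S.card = k}.Nonempty := ⟨_, _, hP0, rfl⟩
    obtain ⟨S, hPS, hScard⟩ := Nat.sInf_mem hne
    have hmin : ∀ T, P T → S.card ≤ T.card := by
      intro T hT
      rw [hScard]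
      exact Nat.sInf_le ⟨T, hT, rfl⟩
    obtain ⟨haS, hbS, hsep⟩ := hPS
    set A : Set V := {v | Reach G ↑S a v} with hA
    set B : Set V := {v | Reach G ↑S b v} with hB
    have haA : a ∈ A := Reach.refl haS
    have hbB : b ∈ B := Reach.refl hbS
    have hAB : ∀ v, v ∈ A → v ∈ B → False := fun v h1 h2 => hsep (h1.trans h2.symm)
    have hAS : ∀ v, v ∈ A → (v : V) ∉ (S : Set V) := fun v h => h.not_mem_right
    have hBS : ∀ v, v ∈ B → (v : V) ∉ (S : Set V) := fun v h => h.not_mem_right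
    -- every separator vertex has neighbors in both A and B
    have hnbr : ∀ x ∈ S, (∃ c ∈ A, G.Adj x c) ∧ ∃ c ∈ B, G.Adj x c := by
      intro x hx
      have hcard' : (S.erase x).card < S.card := Finset.card_erase_lt_of_mem hx
      have hnp : ¬(a ∉ S.erase x ∧ b ∉ S.erase x ∧ ¬Reach G ↑(S.erase x) a b) :=
        fun h => absurd (hmin _ h) (by omega)
      push_neg at hnp
      obtain ⟨w0, hw0⟩ := hnp (fun h => haS (Finset.mem_of_mem_erase h))
        (fun h => hbS (Finset.mem_of_mem_erase h))
      set w := w0.bypass with hw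
      have hwp : w.IsPath := w0.bypass_isPath
      have hwS : ∀ z ∈ w.support, z ∉ (↑(S.erase x) : Set V) :=
        fun z hz => hw0 z (w0.support_bypass_subset hz)
      have hxw : x ∈ w.support := by
        by_contra hxw
        refine hsep ⟨w, fun z hz => ?_⟩
        intro hzS
        refine hwS z hz ?_
        simp only [Finset.coe_erase, Set.mem_diff, Set.mem_singleton_iff]
        exact ⟨hzS, fun h => hxw (h ▸ hz)⟩
      have havoid : ∀ z ∈ w.support, z ≠ x → (z : V) ∉ (S : Set V) := by
        intro z hz hzx hzS
        refine hwS z hz ?_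
        simp only [Finset.coe_erase, Set.mem_diff, Set.mem_singleton_iff]
        exact ⟨hzS, hzx⟩
      constructor
      · -- A-side neighbor, from (takeUntil x).reverse
        have htp : (w.takeUntil x hxw).reverse.IsPath := (hwp.takeUntil hxw).reverse
        have htsup : ∀ z ∈ (w.takeUntil x hxw).reverse.support, z ∈ w.support := by
          intro z hz
          rw [SimpleGraph.Walk.support_reverse, List.mem_reverse] at hz
          exact w.support_takeUntil_subset hxw hz
        generalize (w.takeUntil x hxw).reverse = t at htp htsup
        cases t with
        | nil => exact absurd hx haS
        | @cons _ c _ hadj w2 =>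
          refine ⟨c, ?_, hadj⟩
          rw [SimpleGraph.Walk.cons_isPath_iff] at htp
          have hw2 : ∀ z ∈ w2.support, (z : V) ∉ (S : Set V) := by
            intro z hz
            refine havoid z (htsup z (by
              rw [SimpleGraph.Walk.support_cons]
              exact List.mem_cons_of_mem _ hz)) ?_
            rintro rfl
            exact htp.2 hz
          exact Reach.symm ⟨w2, hw2⟩
      · -- B-side neighbor, from dropUntil x
        have htp : (w.dropUntil x hxw).IsPath := hwp.dropUntil hxw
        have htsup : ∀ z ∈ (w.dropUntil x hxw).support, z ∈ w.support := fun z hz =>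
          w.support_dropUntil_subset hxw hz
        generalize (w.dropUntil x hxw) = t at htp htsup
        cases t with
        | nil => exact absurd hx hbS
        | @cons _ c _ hadj w2 =>
          refine ⟨c, ?_, hadj⟩
          rw [SimpleGraph.Walk.cons_isPath_iff] at htp
          have hw2 : ∀ z ∈ w2.support, (z : V) ∉ (S : Set V) := by
            intro z hz
            refine havoid z (htsup z (by
              rw [SimpleGraph.Walk.support_cons]
              exact List.mem_cons_of_mem _ hz)) ?_
            rintro rfl
            exact htp.2 hz
          exact Reach.symm ⟨w2, hw2⟩
    -- the separator is a clique
    have hclq : ∀ x ∈ S, ∀ y ∈ S, x ≠ y → G.Adj x y := by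
      intro x hxS y hyS hxy
      by_contra hnxy
      have hwalk : ∀ (base : V), (∃ c, Reach G ↑S base c ∧ G.Adj x c) →
          (∃ c, Reach G ↑S base c ∧ G.Adj y c) →
          ∃ p : G.Walk x y, p.IsPath ∧ ∀ z ∈ p.support,
            z = x ∨ z = y ∨ Reach G ↑S base z := by
        intro base hcx hcy
        obtain ⟨cx, hrcx, hacx⟩ := hcx
        obtain ⟨cy, hrcy, hacy⟩ := hcy
        obtain ⟨mw, hmw⟩ := hrcx.symm.trans hrcy
        set middle := mw.append (SimpleGraph.Walk.cons hacy.symm .nil) with hmid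
        set w1 := SimpleGraph.Walk.cons hacx middle with hw1
        have hsup : ∀ z ∈ w1.support, z = x ∨ z = y ∨ Reach G ↑S base z := by
          intro z hz
          rw [hw1, SimpleGraph.Walk.support_cons] at hz
          rcases List.mem_cons.mp hz with rfl | hz
          · exact Or.inl rfl
          · rw [hmid, SimpleGraph.Walk.mem_support_append_iff] at hz
            rcases hz with hz | hz
            · exact Or.inr (Or.inr (hrcx.trans (Reach.of_mem_support hmw hz)))
            · simp only [SimpleGraph.Walk.support_cons, SimpleGraph.Walk.support_nil,
                List.mem_cons, List.mem_singleton, List.not_mem_nil, or_false] at hz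
              rcases hz with rfl | rfl
              · exact Or.inr (Or.inr hrcy)
              · exact Or.inr (Or.inl rfl)
        exact ⟨w1.bypass, w1.bypass_isPath,
          fun z hz => hsup z (w1.support_bypass_subset hz)⟩
      -- minimal paths through each side
      have hminpath : ∀ (base : V), (∃ p : G.Walk x y, p.IsPath ∧ ∀ z ∈ p.support,
            z = x ∨ z = y ∨ Reach G ↑S base z) →
          ∃ p : G.Walk x y, (p.IsPath ∧ ∀ z ∈ p.support,
            z = x ∨ z = y ∨ Reach G ↑S base z) ∧
            ∀ q : G.Walk x y, q.IsPath → (∀ z ∈ q.support,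
              z = x ∨ z = y ∨ Reach G ↑S base z) → p.length ≤ q.length := by
        intro base ⟨p0, hp0⟩
        set L := {k | ∃ p : G.Walk x y, (p.IsPath ∧ ∀ z ∈ p.support,
            z = x ∨ z = y ∨ Reach G ↑S base z) ∧ p.length = k} with hL
        obtain ⟨p, hp, hplen⟩ := Nat.sInf_mem (⟨p0.length, p0, hp0, rfl⟩ : L.Nonempty)
        exact ⟨p, hp, fun q hq1 hq2 => hplen ▸ Nat.sInf_le ⟨q, ⟨hq1, hq2⟩, rfl⟩⟩
      obtain ⟨p1, ⟨hp1path, hp1sup⟩, hp1min⟩ := hminpath a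
        (hwalk a ⟨_, (hnbr x hxS).1.choose_spec.1, (hnbr x hxS).1.choose_spec.2⟩
          ⟨_, (hnbr y hyS).1.choose_spec.1, (hnbr y hyS).1.choose_spec.2⟩)
      obtain ⟨p2, ⟨hp2path, hp2sup⟩, hp2min⟩ := hminpath b
        (hwalk b ⟨_, (hnbr x hxS).2.choose_spec.1, (hnbr x hxS).2.choose_spec.2⟩
          ⟨_, (hnbr y hyS).2.choose_spec.1, (hnbr y hyS).2.choose_spec.2⟩)
      -- each has length at least 2
      have hlen2 : ∀ p : G.Walk x y, p.IsPath → 2 ≤ p.length := by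
        intro p _
        rcases Nat.lt_or_ge p.length 2 with h2 | h2
        · interval_cases h : p.length
          · exact absurd (SimpleGraph.Walk.eq_of_length_eq_zero h) hxy
          · exact absurd (p.adj_of_mem_edges (by rw [walk_length_one_edges p h]; simp)) hnxy
        · exact h2
      have hxA : ∀ z, z ∈ A → z ≠ x ∧ z ≠ y := by
        rintro z hz
        exact ⟨fun h => hAS z hz (h ▸ hxS), fun h => hAS z hz (h ▸ hyS)⟩
      have hxB : ∀ z, z ∈ B → z ≠ x ∧ z ≠ y := by
        rintro z hz
        exact ⟨fun h => hBS z hz (h ▸ hxS), fun h => hBS z hz (h ▸ hyS)⟩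
      -- supports only meet in x, y
      have hmeet : ∀ z, z ∈ p1.support → z ∈ p2.support → z = x ∨ z = y := by
        intro z h1 h2
        rcases hp1sup z h1 with rfl | rfl | hzA
        · exact Or.inl rfl
        · exact Or.inr rfl
        · rcases hp2sup z h2 with rfl | rfl | hzB
          · exact Or.inl rfl
          · exact Or.inr rfl
          · exact absurd hzB (fun h => hAB z hzA h)
      -- edges of the two sides are disjoint
      have hedis : ∀ u' v' : V, s(u', v') ∈ p1.edges → s(u', v') ∈ p2.edges → False := by
        intro u' v' h1 h2
        have hadj := p1.adj_of_mem_edges h1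
        have hu1 := p1.fst_mem_support_of_mem_edges h1
        have hv1 := p1.snd_mem_support_of_mem_edges h1
        have hu2 := p2.fst_mem_support_of_mem_edges h2
        have hv2 := p2.snd_mem_support_of_mem_edges h2
        rcases hmeet u' hu1 hu2 with rfl | rfl <;> rcases hmeet v' hv1 hv2 with rfl | rfl
        · exact hadj.ne rfl
        · exact hnxy hadj
        · exact hnxy hadj.symm
        · exact hadj.ne rfl
      -- build the cycle
      set c : G.Walk x x := p1.append p2.reverse with hc
      have hclen : c.length = p1.length + p2.length := by
        rw [hc, SimpleGraph.Walk.length_append, SimpleGraph.Walk.length_reverse]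
      have hcedges : c.edges = p1.edges ++ p2.reverse.edges := by
        rw [hc, SimpleGraph.Walk.edges_append]
      have hrevmem : ∀ e, e ∈ p2.reverse.edges ↔ e ∈ p2.edges := by
        intro e
        rw [SimpleGraph.Walk.edges_reverse, List.mem_reverse]
      have hcyc : c.IsCycle := by
        refine ⟨⟨⟨?_⟩, ?_⟩, ?_⟩
        · rw [hcedges]
          refine List.Nodup.append hp1path.edges_nodup hp2path.reverse.edges_nodup ?_
          intro e he1 he2
          induction e using Sym2.ind with
          | _ u' v' => exact hedis u' v' he1 ((hrevmem _).mp he2)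
        · intro hnil
          have := hlen2 p1 hp1path
          rw [hnil] at hclen
          simp at hclen
          omega
        · have htail : c.support.tail = p1.support.tail ++ p2.reverse.support.tail := by
            rw [hc, ← SimpleGraph.Walk.tail_support_append]
          rw [htail]
          have h1 := hp1path.support_nodup
          have h2 := hp2path.reverse.support_nodup
          rw [p1.support_eq_cons] at h1
          rw [p2.reverse.support_eq_cons] at h2
          obtain ⟨hx1, h1⟩ := List.nodup_cons.mp h1
          obtain ⟨hy2, h2⟩ := List.nodup_cons.mp h2
          refine List.Nodup.append h1 h2 ?_
          intro z hz1 hz2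
          have hz1' : z ∈ p1.support := by
            rw [p1.support_eq_cons]; exact List.mem_cons_of_mem _ hz1
          have hz2' : z ∈ p2.support := by
            have : z ∈ p2.reverse.support := by
              rw [p2.reverse.support_eq_cons]; exact List.mem_cons_of_mem _ hz2
            rwa [SimpleGraph.Walk.support_reverse, List.mem_reverse] at this
          rcases hmeet z hz1' hz2' with rfl | rfl
          · exact hx1 hz1
          · exact hy2 hz2
      obtain ⟨cu, cv, hcu, hcv, hcadj, hce⟩ := hG x c hcyc (by
        have := hlen2 p1 hp1path
        have := hlen2 p2 hp2path
        omega)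
      have hce1 : s(cu, cv) ∉ p1.edges := fun h => hce (by
        rw [hcedges]; exact List.mem_append_left _ h)
      have hce2 : s(cu, cv) ∉ p2.edges := fun h => hce (by
        rw [hcedges]; exact List.mem_append_right _ ((hrevmem _).mpr h))
      have hsplit : ∀ z, z ∈ c.support → z ∈ p1.support ∨ z ∈ p2.support := by
        intro z hz
        rw [hc, SimpleGraph.Walk.mem_support_append_iff] at hz
        rcases hz with hz | hz
        · exact Or.inl hz
        · rw [SimpleGraph.Walk.support_reverse, List.mem_reverse] at hz
          exact Or.inr hz
      -- a chord inside one of the sides contradicts minimality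
      have hcontra1 : cu ∈ p1.support → cv ∈ p1.support → False := by
        intro h1 h2
        obtain ⟨q, hqlen, hqsup⟩ := shortcut G p1 h1 h2 hcadj hce1
        have := hp1min q.bypass q.bypass_isPath
          (fun z hz => hp1sup z (hqsup z (q.support_bypass_subset hz)))
        have := q.length_bypass_le
        omega
      have hcontra2 : cu ∈ p2.support → cv ∈ p2.support → False := by
        intro h1 h2
        obtain ⟨q, hqlen, hqsup⟩ := shortcut G p2 h1 h2 hcadj hce2
        have := hp2min q.bypass q.bypass_isPath
          (fun z hz => hp2sup z (hqsup z (q.support_bypass_subset hz)))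
        have := q.length_bypass_le
        omega
      -- remaining case: a chord joining the two sides, contradicting separation
      have hAmem : ∀ z, z ∈ p1.support → z ∉ p2.support → z ∈ A := by
        intro z h1 h2
        rcases hp1sup z h1 with rfl | rfl | hz
        · exact absurd p2.start_mem_support h2
        · exact absurd p2.end_mem_support h2
        · exact hz
      have hBmem : ∀ z, z ∈ p2.support → z ∉ p1.support → z ∈ B := by
        intro z h1 h2
        rcases hp2sup z h1 with rfl | rfl | hz
        · exact absurd p1.start_mem_support h2
        · exact absurd p1.end_mem_support h2
        · exact hz
      have hcross : ∀ zu zv, zu ∈ A → zv ∈ B → G.Adj zu zv → False := by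
        intro zu zv hu hv hadj
        exact hsep (hu.trans ((Reach.adj hadj (hAS zu hu) (hBS zv hv)).trans hv.symm))
      rcases hsplit cu hcu with h1 | h1 <;> rcases hsplit cv hcv with h2 | h2
      · exact hcontra1 h1 h2
      · by_cases h3 : cv ∈ p1.support
        · exact hcontra1 h1 h3
        · by_cases h4 : cu ∈ p2.support
          · exact hcontra2 h4 h2
          · exact hcross cu cv (hAmem cu h1 h4) (hBmem cv h2 h3) hcadj
      · by_cases h3 : cu ∈ p1.support
        · exact hcontra1 h3 h2
        · by_cases h4 : cv ∈ p2.support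
          · exact hcontra2 h1 h4
          · exact hcross cv cu (hAmem cv h2 h4) (hBmem cu h1 h3) hcadj.symm
      · exact hcontra2 h1 h2
        -- find a simplicial vertex within each side
    have hfind : ∀ base zout : V, base ∉ (S : Set V) → zout ∉ (S : Set V) →
        ¬Reach G ↑S base zout →
        ∃ s, Reach G ↑S base s ∧ Simplicial G s := by
      intro base zout hbase hzoutS hzout
      set W : Set V := {v | Reach G ↑S base v} ∪ ↑S with hW
      have hzoutW : zout ∉ W := by
        rw [hW]
        rintro (h | h)
        · exact hzout h
        · exact hzoutS h
      have hcardW : Fintype.card ↥W < Fintype.card V := by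
        refine Fintype.card_lt_of_injective_of_notMem (fun (w : ↥W) => (w : V))
          Subtype.val_injective (b := zout) ?_
        rintro ⟨⟨z, hz⟩, rfl⟩
        exact hzoutW hz
      have hclosed : ∀ v, v ∈ W → v ∉ (S : Set V) → ∀ z, G.Adj v z → z ∈ W := by
        intro v hvW hvS z hadj
        by_cases hzS : z ∈ (S : Set V)
        · exact Or.inr hzS
        · rcases hvW with hvW | hvW
          · exact Or.inl (hvW.trans (Reach.adj hadj hvS hzS))
          · exact absurd hvW hvS
      rcases ih ↥W (G.induce W) (hG.induce W) (by omega) with hcomp' | ⟨s, t, hst, hnst, hs, ht⟩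
      · -- complete: base itself is simplicial
        have hbaseW : base ∈ W := Or.inl (Reach.refl hbase)
        refine ⟨base, Reach.refl hbase, simplicial_transfer hbaseW
          (hclosed base hbaseW hbase) ?_⟩
        intro p q _ _ hpq
        have := hcomp' p q (fun h => hpq (by simp [h]))
        simpa using this
      · -- two nonadjacent simplicial vertices: not both in S
        have hkey : ∀ (v : ↥W), (v : V) ∉ (S : Set V) → Simplicial (G.induce W) v →
            ∃ s, Reach G ↑S base s ∧ Simplicial G s := by
          intro v hvS hv
          have hvW : (v : V) ∈ W := v.2
          have hvR : Reach G ↑S base (v : V) := by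
            rcases hvW with h | h
            · exact h
            · exact absurd h hvS
          exact ⟨v, hvR, simplicial_transfer v.2 (hclosed v v.2 hvS) (by
            convert hv)⟩
        by_cases hsS : (s : V) ∈ (S : Set V)
        · by_cases htS : (t : V) ∈ (S : Set V)
          · exfalso
            refine hnst ?_
            have : G.Adj s t := hclq s hsS t htS (fun h => hst (Subtype.ext h))
            simpa using this
          · exact hkey t htS ht
        · exact hkey s hsS hs
    obtain ⟨sA, hsAr, hsA⟩ := hfind a b haS hbS hsep
    obtain ⟨sB, hsBr, hsB⟩ := hfind b a hbS haS (fun h => hsep h.symm)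
    refine ⟨sA, sB, ?_, ?_, hsA, hsB⟩
    · rintro rfl
      exact hsep (hsAr.trans hsBr.symm)
    · intro hadj
      exact hsep (hsAr.trans ((Reach.adj hadj hsAr.not_mem_right
        hsBr.not_mem_right).trans hsBr.symm))

lemma PDP_le_chromPoly {V : Type} [Fintype V] (G : SimpleGraph V) (m : ℕ) :
    PDP G m ≤ chromPoly G m := by
  classical
  set C0 : DPCover G m :=
    { H := { Adj := fun p q => (p.1 = q.1 ∧ p.2 ≠ q.2) ∨ (G.Adj p.1 q.1 ∧ p.2 = q.2)
             symm := by
               constructor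
               rintro p q (⟨h1, h2⟩ | ⟨h1, h2⟩)
               · exact Or.inl ⟨h1.symm, h2.symm⟩
               · exact Or.inr ⟨h1.symm, h2.symm⟩
             loopless := by
               constructor
               rintro p (⟨h1, h2⟩ | ⟨h1, h2⟩)
               · exact h2 rfl
               · exact G.loopless.irrefl _ h1 }
      fiber_complete := fun v i j h => Or.inl ⟨rfl, h⟩
      cross := by
        rintro u v i j (⟨h1, h2⟩ | ⟨h1, h2⟩)
        · exact Or.inl h1
        · exact Or.inr h1
      matching := by
        rintro u v huv i j j' (⟨h1, h2⟩ | ⟨h1, h2⟩) h'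
        · exact absurd h1 huv.ne
        · rcases h' with ⟨h1', h2'⟩ | ⟨h1', h2'⟩
          · exact absurd h1' huv.ne
          · exact h2.symm.trans h2' } with hC0
  have hcount : C0.count = chromPoly G m := by
    refine Nat.card_congr (Equiv.subtypeEquivRight fun f => ?_)
    constructor
    · intro hf p q hadj heq
      exact hf p q (Or.inr ⟨hadj, heq⟩)
    · rintro hf p q (⟨h1, h2⟩ | ⟨h1, h2⟩)
      · exact h2 (by simp only at h1 ⊢; rw [h1])
      · exact hf p q h1 h2
  exact hcount ▸ Nat.sInf_le ⟨C0, rfl⟩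

/-- restriction of a cover to the complement of a vertex -/
def DPCover.restrict {V : Type} {G : SimpleGraph V} {m : ℕ} (C : DPCover G m) (s : V) :
    DPCover (G.induce {x | x ≠ s}) m where
  H := { Adj := fun p q => C.H.Adj (p.1.1, p.2) (q.1.1, q.2)
         symm := ⟨fun p q h => C.H.adj_symm h⟩
         loopless := ⟨fun p h => C.H.loopless.irrefl _ h⟩ }
  fiber_complete := fun v i j h => C.fiber_complete v.1 i j h
  cross := fun u v i j h => (C.cross u.1 v.1 i j h).imp (fun h' => Subtype.ext h') id
  matching := fun u v huv i j j' h h' => C.matching u.1 v.1 huv i j j' h h'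

lemma chromPoly_step {V : Type} [Fintype V] [DecidableEq V] {G : SimpleGraph V} {s : V}
    (hs : Simplicial G s) (m : ℕ) :
    chromPoly G m ≤
      (m - Nat.card {v : V // G.Adj s v}) * chromPoly (G.induce {x : V | x ≠ s}) m := by
  classical
  set G' := G.induce {x : V | x ≠ s} with hG'
  set d := Nat.card {v : V // G.Adj s v} with hdd
  set α := {f : V → Fin m // ∀ u v : V, G.Adj u v → f u ≠ f v} with hα
  set β := {g : ↥{x : V | x ≠ s} → Fin m // ∀ u v, G'.Adj u v → g u ≠ g v} with hβ
  have hρprop : ∀ f : α, ∀ u v, G'.Adj u v → f.1 u.1 ≠ f.1 v.1 :=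
    fun f u v h => f.2 u.1 v.1 h
  set ρ : α → β := fun f => ⟨fun x => f.1 x.1, hρprop f⟩ with hρ
  -- the neighbours of s inside the subtype
  set Nf : Finset ↥{x : V | x ≠ s} := Finset.univ.filter (fun v => G.Adj s v.1) with hNf
  have hNfcard : Nf.card = d := by
    rw [hdd, Nat.card_eq_fintype_card, Fintype.card_subtype]
    refine Finset.card_bij (fun v _ => v.1) ?_ ?_ ?_
    · intro v hv
      simp only [hNf, Finset.mem_filter] at hv
      simp [hv.2]
    · intro v hv w hw h
      exact Subtype.ext h
    · intro v hv
      simp only [Finset.mem_filter] at hv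
      exact ⟨⟨v, hv.2.ne'⟩, by simp [hNf, hv.2], rfl⟩
  have key : ∀ g : β, (Finset.univ.filter (fun f : α => ρ f = g)).card ≤ m - d := by
    intro g
    set img : Finset (Fin m) := Nf.image (fun v => g.1 v) with himg
    have himgcard : img.card = d := by
      rw [himg, ← hNfcard]
      refine Finset.card_image_of_injOn ?_
      intro v hv w hw hne
      by_contra hvw
      simp only [hNf, Finset.mem_coe, Finset.mem_filter] at hv hw
      have hvw' : v.1 ≠ w.1 := fun h => hvw (Subtype.ext h)
      exact g.2 v w (hs v.1 w.1 hv.2 hw.2 hvw') hne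
    calc (Finset.univ.filter (fun f : α => ρ f = g)).card
        ≤ imgᶜ.card := by
          refine Finset.card_le_card_of_injOn (fun f => f.1 s) ?_ ?_
          · intro f hf
            simp only [Finset.mem_coe, Finset.coe_filter, Set.mem_setOf_eq] at hf ⊢
            rw [Finset.mem_compl]
            intro hmem
            rw [himg, Finset.mem_image] at hmem
            obtain ⟨v, hv, hgv⟩ := hmem
            simp only [hNf, Finset.mem_filter] at hv
            have : g.1 v = f.1 v.1 := by rw [← hf.2]
            exact f.2 s v.1 hv.2 (hgv.symm.trans this)
          · intro f1 hf1 f2 hf2 heq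
            simp only [Finset.mem_coe, Finset.mem_filter] at hf1 hf2
            refine Subtype.ext (funext fun x => ?_)
            by_cases hx : x = s
            · rw [hx]; exact heq
            · have := congrArg (fun g : β => g.1 ⟨x, hx⟩) (hf1.2.trans hf2.2.symm)
              simpa using this
      _ = m - d := by rw [Finset.card_compl, himgcard, Fintype.card_fin]
  calc chromPoly G m = (Finset.univ : Finset α).card := by
        rw [chromPoly, Nat.card_eq_fintype_card]; rfl
    _ = ∑ g ∈ (Finset.univ : Finset β), (Finset.univ.filter (fun f : α => ρ f = g)).card :=
        Finset.card_eq_sum_card_fiberwise (fun f _ => Finset.mem_univ (ρ f))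
    _ ≤ ∑ _g ∈ (Finset.univ : Finset β), (m - d) := Finset.sum_le_sum fun g _ => key g
    _ = (Finset.univ : Finset β).card * (m - d) := by
        rw [Finset.sum_const, smul_eq_mul]
    _ = (m - d) * chromPoly G' m := by
        rw [chromPoly, Nat.card_eq_fintype_card, mul_comm]; rfl

lemma countAt_step {V : Type} [Fintype V] [DecidableEq V] {G : SimpleGraph V} {s : V}
    (hsne : True) {m : ℕ} (C : DPCover G m) (u : V) (hu : u ≠ s) (r : Fin m) :
    (m - Nat.card {v : V // G.Adj s v}) * (C.restrict s).countAt ⟨u, hu⟩ r ≤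
      C.countAt u r := by
  classical
  set C' := C.restrict s with hC'
  set d := Nat.card {v : V // G.Adj s v} with hdd
  set α := {f : V → Fin m // C.IsColoring f ∧ f u = r} with hα
  set β := {g : ↥{x : V | x ≠ s} → Fin m // C'.IsColoring g ∧ g ⟨u, hu⟩ = r} with hβ
  set ρ : α → β := fun f => ⟨fun x => f.1 x.1,
    fun p q => f.2.1 p.1 q.1, f.2.2⟩ with hρ
  set Nf : Finset ↥{x : V | x ≠ s} := Finset.univ.filter (fun v => G.Adj s v.1) with hNf
  have hNfcard : Nf.card = d := by
    rw [hdd, Nat.card_eq_fintype_card, Fintype.card_subtype]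
    refine Finset.card_bij (fun v _ => v.1) ?_ ?_ ?_
    · intro v hv
      simp only [hNf, Finset.mem_filter] at hv
      simp [hv.2]
    · intro v hv w hw h
      exact Subtype.ext h
    · intro v hv
      simp only [Finset.mem_filter] at hv
      exact ⟨⟨v, hv.2.ne'⟩, by simp [hNf, hv.2], rfl⟩
  have key : ∀ g : β, m - d ≤ (Finset.univ.filter (fun f : α => ρ f = g)).card := by
    intro g
    set good : Finset (Fin m) :=
      Finset.univ.filter (fun c => ∀ v : ↥{x : V | x ≠ s}, ¬C.H.Adj (s, c) (v.1, g.1 v))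
      with hgoodDef
    have hgoodcard : m - d ≤ good.card := by
      set bad : Finset (Fin m) :=
        Finset.univ.filter (fun c => ¬ ∀ v : ↥{x : V | x ≠ s}, ¬C.H.Adj (s, c) (v.1, g.1 v))
        with hbadDef
      have htot : good.card + bad.card = m := by
        rw [hgoodDef, hbadDef, Finset.card_filter_add_card_filter_not,
          Finset.card_univ, Fintype.card_fin]
      have hbad : bad.card ≤ d := by
        have hsub : bad ⊆
            Nf.biUnion (fun v => Finset.univ.filter
              (fun c => C.H.Adj (s, c) (v.1, g.1 v))) := by
          intro c hc
          simp only [hbadDef, Finset.mem_filter, Finset.mem_univ, true_and, not_forall,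
            not_not] at hc
          obtain ⟨v, hv⟩ := hc
          rw [Finset.mem_biUnion]
          refine ⟨v, ?_, by simp [hv]⟩
          rcases C.cross s v.1 c (g.1 v) hv with h | h
          · exact absurd h.symm v.2
          · simp [hNf, h]
        calc bad.card ≤ (Nf.biUnion (fun v => Finset.univ.filter
              (fun c => C.H.Adj (s, c) (v.1, g.1 v)))).card := Finset.card_le_card hsub
          _ ≤ ∑ v ∈ Nf, (Finset.univ.filter
              (fun c => C.H.Adj (s, c) (v.1, g.1 v))).card := Finset.card_biUnion_le
          _ ≤ ∑ _v ∈ Nf, 1 := by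
            refine Finset.sum_le_sum fun v hv => ?_
            refine Finset.card_le_one.mpr fun c1 h1 c2 h2 => ?_
            simp only [Finset.mem_filter, Finset.mem_univ, true_and] at h1 h2
            simp only [hNf, Finset.mem_filter] at hv
            exact C.matching v.1 s hv.2.symm (g.1 v) c1 c2 (C.H.adj_symm h1) (C.H.adj_symm h2)
          _ = Nf.card := by rw [Finset.sum_const, smul_eq_mul, mul_one]
          _ = d := hNfcard
      omega
    -- extend each good colour to a colouring of G
    have hext : ∀ c ∈ good, ∃ f : α, ρ f = g ∧ f.1 s = c := by
      intro c hc
      simp only [hgoodDef, Finset.mem_filter, Finset.mem_univ, true_and] at hc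
      set fc : V → Fin m := fun x => if hx : x = s then c else g.1 ⟨x, hx⟩ with hfc
      have hfcs : fc s = c := by simp [hfc]
      have hfcn : ∀ (x : V) (hx : x ≠ s), fc x = g.1 ⟨x, hx⟩ := by
        intro x hx
        simp [hfc, hx]
      have hcol : C.IsColoring fc := by
        intro p q
        by_cases hp : p = s <;> by_cases hq : q = s
        · subst hp; subst hq
          rw [hfcs]
          exact C.H.loopless.irrefl _
        · subst hp
          rw [hfcs, hfcn q hq]
          exact hc ⟨q, hq⟩
        · subst hq
          rw [hfcs, hfcn p hp]
          intro h
          exact hc ⟨p, hp⟩ (C.H.adj_symm h)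
        · rw [hfcn p hp, hfcn q hq]
          exact g.2.1 ⟨p, hp⟩ ⟨q, hq⟩
      refine ⟨⟨fc, hcol, by rw [hfcn u hu]; exact g.2.2⟩, ?_, hfcs⟩
      refine Subtype.ext (funext fun x => ?_)
      show fc x.1 = g.1 x
      rw [hfcn x.1 x.2]
    choose F hF1 hF2 using hext
    calc m - d ≤ good.card := hgoodcard
      _ = good.attach.card := Finset.card_attach.symm
      _ = (good.attach.image (fun c => F c.1 c.2)).card := by
        refine (Finset.card_image_of_injOn ?_).symm
        intro c1 _ c2 _ heq
        have h' : (F c1.1 c1.2).1 s = (F c2.1 c2.2).1 s :=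
          congrArg (fun f : α => f.1 s) heq
        rw [hF2, hF2] at h'
        exact Subtype.ext h'
      _ ≤ (Finset.univ.filter (fun f : α => ρ f = g)).card := by
        refine Finset.card_le_card ?_
        intro f hf
        rw [Finset.mem_image] at hf
        obtain ⟨c, _, rfl⟩ := hf
        simp [hF1]
  calc (m - d) * C'.countAt ⟨u, hu⟩ r
      = (Finset.univ : Finset β).card * (m - d) := by
        rw [DPCover.countAt, Nat.card_eq_fintype_card, mul_comm]; rfl
    _ = ∑ _g ∈ (Finset.univ : Finset β), (m - d) := by rw [Finset.sum_const, smul_eq_mul]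
    _ ≤ ∑ g ∈ (Finset.univ : Finset β), (Finset.univ.filter (fun f : α => ρ f = g)).card :=
        Finset.sum_le_sum fun g _ => key g
    _ = (Finset.univ : Finset α).card :=
        (Finset.card_eq_sum_card_fiberwise (fun f _ => Finset.mem_univ (ρ f))).symm
    _ = C.countAt u r := by rw [DPCover.countAt, Nat.card_eq_fintype_card]; rfl

theorem key_chordal : ∀ (n : ℕ) (V : Type) [Fintype V] (G : SimpleGraph V), IsChordal G →
    Fintype.card V ≤ n → ∀ (m : ℕ) (C : DPCover G m) (u : V) (r : Fin m),
    chromPoly G m ≤ m * C.countAt u r := by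
  intro n
  induction n with
  | zero =>
    intro V _ G _ hcard m C u r
    exact absurd (Fintype.card_pos_iff.mpr ⟨u⟩) (by omega)
  | succ n ih =>
    intro V _ G hG hcard m C u r
    classical
    by_cases h1 : Fintype.card V ≤ 1
    · -- at most one vertex
      have hsub : Subsingleton V := Fintype.card_le_one_iff_subsingleton.mp h1
      have hpos : 0 < C.countAt u r := by
        rw [DPCover.countAt]
        have hnon : Nonempty {f : V → Fin m // C.IsColoring f ∧ f u = r} := by
          refine ⟨⟨fun _ => r, fun p q => ?_, rfl⟩⟩
          have hqp : q = p := Subsingleton.elim q p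
          subst hqp
          exact C.H.loopless.irrefl _
        exact Nat.card_pos
      have hchrom : chromPoly G m ≤ m := by
        rw [chromPoly]
        calc Nat.card {f : V → Fin m // ∀ u v : V, G.Adj u v → f u ≠ f v}
            ≤ Nat.card (V → Fin m) :=
              Nat.card_le_card_of_injective Subtype.val Subtype.val_injective
          _ = m := by
            rw [Nat.card_fun, Nat.card_eq_fintype_card, Nat.card_eq_fintype_card,
              Fintype.card_fin]
            have : Fintype.card V = 1 := by
              have := Fintype.card_pos_iff.mpr ⟨u⟩
              omega
            rw [this, pow_one]
      calc chromPoly G m ≤ m := hchrom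
        _ = m * 1 := (mul_one m).symm
        _ ≤ m * C.countAt u r := Nat.mul_le_mul_left m hpos
    · -- at least two vertices: find a simplicial vertex distinct from u
      push_neg at h1
      obtain ⟨s, hsu, hsimp⟩ : ∃ s : V, s ≠ u ∧ Simplicial G s := by
        rcases dirac (Fintype.card V) V G hG le_rfl with hcomp | ⟨s1, s2, hne, _, hs1, hs2⟩
        · obtain ⟨s, hs⟩ := Fintype.exists_ne_of_one_lt_card h1 u
          exact ⟨s, hs, fun a b ha hb hab => hcomp a b hab⟩
        · rcases Classical.em (s1 = u) with rfl | hs1u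
          · exact ⟨s2, fun h => hne (h.symm ▸ rfl), hs2⟩
          · exact ⟨s1, hs1u, hs1⟩
      have husne : u ≠ s := hsu.symm
      have hcard' : Fintype.card ↥{x : V | x ≠ s} ≤ n := by
        have hlt : Fintype.card ↥{x : V | x ≠ s} < Fintype.card V := by
          refine Fintype.card_lt_of_injective_of_notMem
            (fun (w : ↥{x : V | x ≠ s}) => (w : V)) Subtype.val_injective (b := s) ?_
          rintro ⟨⟨z, hz⟩, hzz⟩
          exact hz hzz
        omega
      calc chromPoly G m
          ≤ (m - Nat.card {v : V // G.Adj s v}) * chromPoly (G.induce {x : V | x ≠ s}) m :=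
            chromPoly_step hsimp m
        _ ≤ (m - Nat.card {v : V // G.Adj s v}) *
              (m * (C.restrict s).countAt ⟨u, husne⟩ r) :=
            Nat.mul_le_mul_left _
              (ih ↥{x : V | x ≠ s} (G.induce {x : V | x ≠ s}) (hG.induce _) hcard' m
                (C.restrict s) ⟨u, husne⟩ r)
        _ = m * ((m - Nat.card {v : V // G.Adj s v}) * (C.restrict s).countAt ⟨u, husne⟩ r) := by
            ring
        _ ≤ m * C.countAt u r := Nat.mul_le_mul_left m (countAt_step trivial C u husne r)

theorem stmt_14 {V : Type} [Fintype V] (G : SimpleGraph V) (hG : IsChordal G)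
    (m : ℕ) (hm : G.chromaticNumber ≤ (m : ℕ∞))
    (C : DPCover G m) (u : V) (r : Fin m) :
    PDP G m ≤ m * C.countAt u r :=
  le_trans (PDP_le_chromPoly G m) (key_chordal (Fintype.card V) V G hG le_rfl m C u r)
end
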